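/- Let φ:ℕ→ℝ⁺ with liminf_{n→∞} φ(n)/n = ∞. Then the set F(φ)={x∈(0,1]: d_n(x)≥φ(n) for infinitely many n} has Hausdorff dimension 0. -/

import Mathlib

open MeasureTheory Filter Set Real
open scoped ENNReal NNReal Topology

/-- First digit of the power-2-decaying Gauss-like expansion:
`⌈y⌉` in the paper denotes the smallest integer strictly larger than `y`. -/
noncomputable def p2dD1 (x : ℝ) : ℕ := (⌊-Real.logb 2 x⌋ + 1).toNat

/-- The Gauss-like map `T x = 2^n x - 1` on `(1/2^n, 1/2^(n-1)]`. -/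
noncomputable def p2dT (x : ℝ) : ℝ := 2 ^ p2dD1 x * x - 1

/-- `n`-th digit (`n ≥ 1`) of the P2DGL expansion. -/
noncomputable def p2dDigit (n : ℕ) (x : ℝ) : ℕ := p2dD1 (p2dT^[n-1] x)

/-- Maximal digit among the first `n` digits. -/
noncomputable def p2dL (n : ℕ) (x : ℝ) : ℕ :=
  Finset.sup (Finset.Icc 1 n) (fun i => p2dDigit i x)



lemma p2d_basic {x : ℝ} (hx : x ∈ Set.Ioc (0:ℝ) 1) :
    1 ≤ p2dD1 x ∧ ((2:ℝ)^(p2dD1 x))⁻¹ < x ∧ x ≤ 2 * ((2:ℝ)^(p2dD1 x))⁻¹ := by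
  obtain ⟨hx0, hx1⟩ := hx
  set d : ℤ := ⌊-Real.logb 2 x⌋ with hd
  have hlog : Real.logb 2 x ≤ 0 := Real.logb_nonpos (by norm_num) hx0.le hx1
  have hd0 : 0 ≤ d := Int.le_floor.2 (by simpa using neg_nonneg.2 hlog)
  have hD : (p2dD1 x : ℤ) = d + 1 := by
    simp [p2dD1, Int.toNat_of_nonneg (by omega : (0:ℤ) ≤ d + 1)]
    omega
  have h1 : (d : ℝ) ≤ -Real.logb 2 x := Int.floor_le _
  have h2 : -Real.logb 2 x < d + 1 := Int.lt_floor_add_one _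
  have hxval : x = (2:ℝ) ^ (Real.logb 2 x) := (Real.rpow_logb (by norm_num) (by norm_num) hx0).symm
  constructor
  · have : (0:ℤ) < (p2dD1 x : ℤ) := by omega
    exact_mod_cast this
  have hpow : ((2:ℝ)^(p2dD1 x) : ℝ) = (2:ℝ) ^ ((d:ℝ) + 1) := by
    rw [← Real.rpow_natCast]
    congr 1
    exact_mod_cast hD
  constructor
  · have : (2:ℝ) ^ (-(d:ℝ) - 1) < (2:ℝ) ^ (Real.logb 2 x) := by
      apply Real.rpow_lt_rpow_of_exponent_lt (by norm_num)
      linarith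
    rw [← hxval] at this
    rw [hpow, ← Real.rpow_neg (by norm_num : (0:ℝ) ≤ 2)]
    convert this using 2
    ring
  · have : (2:ℝ) ^ (Real.logb 2 x) ≤ (2:ℝ) ^ (-(d:ℝ)) := by
      apply Real.rpow_le_rpow_of_exponent_le (by norm_num)
      linarith
    rw [← hxval] at this
    calc x ≤ (2:ℝ) ^ (-(d:ℝ)) := this
    _ = 2 * ((2:ℝ) ^ ((d:ℝ)+1))⁻¹ := by
        rw [← Real.rpow_neg (by norm_num : (0:ℝ) ≤ 2)]
        rw [show -((d:ℝ)+1) = -(d:ℝ) + (-1) by ring, Real.rpow_add (by norm_num)]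
        rw [Real.rpow_neg_one]
        ring
    _ = 2 * ((2:ℝ)^(p2dD1 x))⁻¹ := by rw [hpow]

lemma p2dT_mem {x : ℝ} (hx : x ∈ Set.Ioc (0:ℝ) 1) : p2dT x ∈ Set.Ioc (0:ℝ) 1 := by
  obtain ⟨h1, h2, h3⟩ := p2d_basic hx
  have hp : (0:ℝ) < (2:ℝ)^(p2dD1 x) := by positivity
  constructor
  · have := (inv_lt_iff_one_lt_mul₀ hp).1 h2
    simp only [p2dT]; nlinarith
  · simp only [p2dT]
    have : (2:ℝ)^(p2dD1 x) * x ≤ 2 := by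
      rw [mul_comm]
      calc (x : ℝ) * 2^(p2dD1 x) ≤ (2 * ((2:ℝ)^(p2dD1 x))⁻¹) * 2^(p2dD1 x) := by nlinarith
      _ = 2 := by field_simp
    linarith

lemma p2d_decomp {x : ℝ} (hx : x ∈ Set.Ioc (0:ℝ) 1) :
    x = ((2:ℝ)^(p2dD1 x))⁻¹ * (1 + p2dT x) := by
  have hp : (0:ℝ) < (2:ℝ)^(p2dD1 x) := by positivity
  simp only [p2dT]
  field_simp
  ring

noncomputable def p2dWval : List ℕ → ℝ
  | [] => 0
  | a :: w => ((2:ℝ)^a)⁻¹ * (1 + p2dWval w)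

@[simp] lemma p2dWval_nil : p2dWval [] = 0 := rfl
@[simp] lemma p2dWval_cons (a : ℕ) (w : List ℕ) :
    p2dWval (a :: w) = ((2:ℝ)^a)⁻¹ * (1 + p2dWval w) := rfl

/-- the word of the first `m` digits of `x` -/
noncomputable def p2dWrd : ℕ → ℝ → List ℕ
  | 0, _ => []
  | (m+1), x => p2dD1 x :: p2dWrd m (p2dT x)

lemma p2dWrd_eq (m : ℕ) (x : ℝ) :
    p2dWrd m x = List.ofFn (fun j : Fin m => p2dD1 (p2dT^[(j:ℕ)] x)) := by
  induction m generalizing x with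
  | zero => simp [p2dWrd]
  | succ m ih =>
    rw [List.ofFn_succ]
    simp only [p2dWrd, Fin.val_zero, Function.iterate_zero, id_eq, List.cons.injEq, true_and]
    rw [ih]
    congr 1

lemma p2d_key (m : ℕ) : ∀ x ∈ Set.Ioc (0:ℝ) 1,
    p2dT^[m] x ∈ Set.Ioc (0:ℝ) 1 ∧
    x = p2dWval (p2dWrd m x) + ((2:ℝ)^(p2dWrd m x).sum)⁻¹ * p2dT^[m] x := by
  induction m with
  | zero =>
    intro x hx
    refine ⟨by simpa using hx, ?_⟩
    simp [p2dWrd]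
  | succ m ih =>
    intro x hx
    obtain ⟨hmem, heq⟩ := ih (p2dT x) (p2dT_mem hx)
    rw [Function.iterate_succ_apply]
    refine ⟨hmem, ?_⟩
    have hdec := p2d_decomp hx
    simp only [p2dWrd, p2dWval_cons, List.sum_cons]
    set c := p2dWval (p2dWrd m (p2dT x)) with hc
    set S := (p2dWrd m (p2dT x)).sum with hS
    set y := p2dT^[m] (p2dT x) with hy
    rw [pow_add, mul_inv]
    calc x = ((2:ℝ)^(p2dD1 x))⁻¹ * (1 + p2dT x) := hdec
    _ = ((2:ℝ)^(p2dD1 x))⁻¹ * (1 + (c + (2 ^ S)⁻¹ * y)) := by rw [heq]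
    _ = _ := by ring

lemma p2d_cover {x : ℝ} (hx : x ∈ Set.Ioc (0:ℝ) 1) {m K : ℕ}
    (hK : K ≤ p2dDigit (m+1) x) :
    x ∈ Set.Ioc (p2dWval (p2dWrd m x))
      (p2dWval (p2dWrd m x) + 2 * ((2:ℝ)^((p2dWrd m x).sum + K))⁻¹) := by
  obtain ⟨hmem, heq⟩ := p2d_key m x hx
  have hdig : p2dDigit (m+1) x = p2dD1 (p2dT^[m] x) := by simp [p2dDigit]
  obtain ⟨hd1, _, hup⟩ := p2d_basic hmem
  have hy2 : p2dT^[m] x ≤ 2 * ((2:ℝ)^K)⁻¹ := by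
    refine hup.trans ?_
    have : ((2:ℝ)^(p2dD1 (p2dT^[m] x)))⁻¹ ≤ ((2:ℝ)^K)⁻¹ := by
      apply inv_anti₀ (by positivity)
      exact pow_le_pow_right₀ (by norm_num) (hdig ▸ hK)
    linarith
  have hS : (0:ℝ) < ((2:ℝ)^((p2dWrd m x).sum))⁻¹ := by positivity
  constructor
  · have := mul_pos hS hmem.1
    linarith [heq]
  · rw [pow_add, mul_inv]
    have h1 := mul_le_mul_of_nonneg_left hy2 hS.le
    have h2 : ((2:ℝ)^((p2dWrd m x).sum))⁻¹ * (2 * ((2:ℝ)^K)⁻¹)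
        = 2 * (((2:ℝ)^((p2dWrd m x).sum))⁻¹ * ((2:ℝ)^K)⁻¹) := by ring
    linarith [heq]


lemma p2d_tsum_pi_geom (q : ℝ≥0∞) (m : ℕ) :
    ∑' f : Fin m → ℕ, q ^ (∑ j, f j) = ((1 - q)⁻¹) ^ m := by
  induction m with
  | zero =>
    rw [pow_zero, tsum_eq_single (fun i => i.elim0)
      (by intro b hb; exact absurd (Subsingleton.elim b _) hb)]
    simp
  | succ m ih =>
    let e : (ℕ × (Fin m → ℕ)) ≃ (Fin (m+1) → ℕ) := Fin.consEquiv (fun _ => ℕ)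
    rw [← e.tsum_eq, ENNReal.tsum_prod']
    have : ∀ (a : ℕ) (f : Fin m → ℕ),
        q ^ (∑ j, (e (a, f)) j) = q ^ a * q ^ (∑ j, f j) := by
      intro a f
      rw [← pow_add]
      congr 1
      rw [show e (a, f) = Fin.cons a f from rfl]
      simp [Fin.sum_univ_succ]
    calc ∑' (a : ℕ) (f : Fin m → ℕ), q ^ (∑ j, (e (a, f)) j)
        = ∑' (a : ℕ) (f : Fin m → ℕ), q ^ a * q ^ (∑ j, f j) := by
          congr 1; funext a; congr 1; funext f; rw [this]
      _ = ∑' (a : ℕ), q ^ a * ((1 - q)⁻¹) ^ m := by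
          congr 1; funext a; rw [ENNReal.tsum_mul_left, ih]
      _ = (∑' (a : ℕ), q ^ a) * ((1 - q)⁻¹) ^ m := by rw [ENNReal.tsum_mul_right]
      _ = ((1 - q)⁻¹) ^ (m+1) := by rw [ENNReal.tsum_geometric, pow_succ']

lemma p2d_ofReal_pow {s : ℝ} (hs : 0 < s) (L : ℕ) :
    (ENNReal.ofReal (2 * ((2:ℝ)^L)⁻¹))^s
      = (2:ℝ≥0∞)^s * (((2:ℝ≥0∞)^s)⁻¹) ^ L := by
  have h1 : ENNReal.ofReal (2 * ((2:ℝ)^L)⁻¹) = 2 * ((2:ℝ≥0∞)^L)⁻¹ := by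
    rw [ENNReal.ofReal_mul (by norm_num), ENNReal.ofReal_inv_of_pos (by positivity),
      ENNReal.ofReal_pow (by norm_num)]
    norm_num
  rw [h1, ENNReal.mul_rpow_of_nonneg _ _ hs.le, ENNReal.inv_rpow]
  have h2 : (((2:ℝ≥0∞)^L : ℝ≥0∞))^s = ((2:ℝ≥0∞)^s)^L := by
    rw [← ENNReal.rpow_natCast (2:ℝ≥0∞) L, ← ENNReal.rpow_mul, mul_comm,
      ENNReal.rpow_mul, ENNReal.rpow_natCast]
  rw [h2, ← ENNReal.inv_pow]


def p2dDW (m : ℕ) (f : Fin m → ℕ) : List ℕ := List.ofFn (fun j => f j + 1)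

/-- the covering family -/
noncomputable def p2dCov (K : ℕ → ℕ) (N m : ℕ) (f : Fin m → ℕ) : Set ℝ :=
  if N ≤ m + 1 then
    Set.Ioc (p2dWval (p2dDW m f))
      (p2dWval (p2dDW m f) + 2 * ((2:ℝ)^((p2dDW m f).sum + K (m+1)))⁻¹)
  else ∅

lemma p2dCov_diam_true {K : ℕ → ℕ} {N m : ℕ} {f : Fin m → ℕ}
    (hc : N ≤ m + 1) : EMetric.diam (p2dCov K N m f)
      = ENNReal.ofReal (2 * ((2:ℝ)^((p2dDW m f).sum + K (m+1)))⁻¹) := by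
  rw [p2dCov, if_pos hc, EMetric.diam, Real.ediam_Ioc, add_sub_cancel_left]

lemma p2dCov_diam_false {K : ℕ → ℕ} {N m : ℕ} {f : Fin m → ℕ}
    (hc : ¬ N ≤ m + 1) : EMetric.diam (p2dCov K N m f) = 0 := by
  rw [p2dCov, if_neg hc, EMetric.diam, Metric.ediam_empty]

lemma p2dCov_cover (K : ℕ → ℕ) (N : ℕ) {x : ℝ} (hx : x ∈ Set.Ioc (0:ℝ) 1)
    {n : ℕ} (hn : N ≤ n) (h1 : 1 ≤ n) (hd : K n ≤ p2dDigit n x) :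
    ∃ i : (Σ m : ℕ, (Fin m → ℕ)), x ∈ p2dCov K N i.1 i.2 := by
  obtain ⟨m, rfl⟩ : ∃ m, n = m + 1 := ⟨n - 1, by omega⟩
  refine ⟨⟨m, fun j => p2dD1 (p2dT^[(j:ℕ)] x) - 1⟩, ?_⟩
  have hdw : p2dDW m (fun j => p2dD1 (p2dT^[(j:ℕ)] x) - 1) = p2dWrd m x := by
    rw [p2dDW, p2dWrd_eq]
    congr 1
    funext j
    show (p2dD1 (p2dT^[(j:ℕ)] x) - 1) + 1 = p2dD1 (p2dT^[(j:ℕ)] x)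
    have h1 := (p2d_basic (p2d_key (j:ℕ) x hx).1).1
    omega
  show x ∈ p2dCov K N m _
  rw [p2dCov, if_pos (by omega : N ≤ m + 1)]
  simp only [hdw]
  exact p2d_cover hx hd

lemma p2d_h0 (φ : ℕ → ℝ) (hφ : ∀ n, 0 < φ n)
    (h : Tendsto (fun n : ℕ => φ n / n) atTop atTop) {s : ℝ} (hs : 0 < s) :
    μH[s] {x : ℝ | x ∈ Set.Ioc (0:ℝ) 1 ∧
        ∃ᶠ n in atTop, (φ n ≤ (p2dDigit n x : ℝ))} = 0 := by
  classical
  set F := {x : ℝ | x ∈ Set.Ioc (0:ℝ) 1 ∧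
      ∃ᶠ n in atTop, (φ n ≤ (p2dDigit n x : ℝ))} with hF
  set q : ℝ≥0∞ := ((2:ℝ≥0∞)^s)⁻¹ with hqdef
  have h2s : 1 < (2:ℝ≥0∞)^s := ENNReal.one_lt_rpow (by norm_num) hs
  have h2s_ne_top : (2:ℝ≥0∞)^s ≠ ∞ :=
    (ENNReal.rpow_lt_top_of_nonneg hs.le (by norm_num)).ne
  have hq1 : q < 1 := ENNReal.inv_lt_one.2 h2s
  set B := ((1:ℝ≥0∞) - q)⁻¹ with hBdef
  have hB_ne_top : B ≠ ∞ := by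
    rw [hBdef, Ne, ENNReal.inv_eq_top]
    intro hc
    exact hq1.not_ge (tsub_eq_zero_iff_le.1 hc)
  have hB_ne_zero : B ≠ 0 := by
    rw [hBdef]
    exact ENNReal.inv_ne_zero.2 ((tsub_le_self.trans_lt ENNReal.one_lt_top).ne)
  -- choose M
  have hpow0 : Tendsto (fun M : ℕ => q ^ M) atTop (𝓝 0) :=
    ENNReal.tendsto_pow_atTop_nhds_zero_of_lt_one hq1
  have hε : (0:ℝ≥0∞) < 2⁻¹ * B⁻¹ :=
    ENNReal.mul_pos (by norm_num) (ENNReal.inv_ne_zero.2 hB_ne_top)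
  obtain ⟨M₀, hM₀⟩ := eventually_atTop.1 (hpow0.eventually_lt_const hε)
  set M := max M₀ 1 with hMdef
  have hM1 : 1 ≤ M := le_max_right _ _
  have hqM : q ^ M < 2⁻¹ * B⁻¹ := hM₀ M (le_max_left _ _)
  have hB1 : (1:ℝ≥0∞) ≤ B := by
    rw [hBdef]
    exact ENNReal.one_le_inv.2 tsub_le_self
  have hqM1 : q ^ M ≤ 2⁻¹ := by
    refine hqM.le.trans ?_
    calc (2:ℝ≥0∞)⁻¹ * B⁻¹ ≤ 2⁻¹ * 1 := by
          exact mul_le_mul_right (ENNReal.inv_le_one.2 hB1) _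
    _ = 2⁻¹ := mul_one _
  have hqMB : q ^ M * B ≤ 2⁻¹ := by
    calc q ^ M * B ≤ (2⁻¹ * B⁻¹) * B := mul_le_mul_left hqM.le B
    _ = 2⁻¹ * (B⁻¹ * B) := mul_assoc _ _ _
    _ = 2⁻¹ * 1 := by rw [ENNReal.inv_mul_cancel hB_ne_zero hB_ne_top]
    _ = 2⁻¹ := mul_one _
  -- choose N₀
  obtain ⟨N₀, hN₀⟩ := eventually_atTop.1 (h.eventually_ge_atTop (M:ℝ))
  set K : ℕ → ℕ := fun n => ⌈φ n⌉₊ with hKdef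
  have hK : ∀ n, N₀ ≤ n → M * n ≤ K n := by
    intro n hn
    rcases Nat.eq_zero_or_pos n with rfl | hn1
    · simp
    have h1 : (M:ℝ) ≤ φ n / n := hN₀ n hn
    have hnpos : (0:ℝ) < n := by exact_mod_cast hn1
    have h2 : (M:ℝ) * n ≤ φ n := (le_div_iff₀ hnpos).1 h1
    have h3 : ((M * n : ℕ):ℝ) ≤ (K n : ℝ) := by
      push_cast
      exact h2.trans (Nat.le_ceil (φ n))
    exact_mod_cast h3
  -- the covering
  set t : ℕ → (Σ m : ℕ, (Fin m → ℕ)) → Set ℝ := fun N i => p2dCov K N i.1 i.2 with htdef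
  set r : ℕ → ℝ≥0∞ := fun N => ENNReal.ofReal (2 * ((2:ℝ)^N)⁻¹) with hrdef
  have hrt : Tendsto r atTop (𝓝 0) := by
    have h1 : Tendsto (fun N : ℕ => 2 * ((2:ℝ)⁻¹)^N) atTop (𝓝 0) := by
      simpa using (tendsto_pow_atTop_nhds_zero_of_lt_one (by norm_num : (0:ℝ) ≤ 2⁻¹)
        (by norm_num)).const_mul (2:ℝ)
    have h2 := (ENNReal.continuous_ofReal.tendsto 0).comp h1
    simpa [hrdef, inv_pow, ENNReal.ofReal_zero, Function.comp_def] using h2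
  -- diameter bound
  have hdiam : ∀ᶠ N in atTop, ∀ i, EMetric.diam (t N i) ≤ r N := by
    rw [eventually_atTop]
    refine ⟨N₀, fun N hN i => ?_⟩
    rcases i with ⟨m, f⟩
    by_cases hc : N ≤ m + 1
    · show EMetric.diam (p2dCov K N m f) ≤ r N
      rw [p2dCov_diam_true hc]
      apply ENNReal.ofReal_le_ofReal
      have hNle : N ≤ (p2dDW m f).sum + K (m+1) := by
        have g1 : M * (m+1) ≤ K (m+1) := hK _ (hN.trans hc)
        have g2 : m + 1 ≤ M * (m+1) := by nlinarith [hM1]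
        omega
      have : (2:ℝ)^N ≤ (2:ℝ)^((p2dDW m f).sum + K (m+1)) :=
        pow_le_pow_right₀ (by norm_num) hNle
      have hinv := inv_anti₀ (by positivity : (0:ℝ) < (2:ℝ)^N) this
      linarith
    · show EMetric.diam (p2dCov K N m f) ≤ r N
      rw [p2dCov_diam_false hc]
      exact zero_le
  -- covering property
  have hcov : ∀ᶠ N in atTop, F ⊆ ⋃ i, t N i := by
    refine Eventually.of_forall (fun N => ?_)
    intro x hx
    obtain ⟨n, hn, hφn⟩ := frequently_atTop.1 hx.2 (max N 1)
    have hd : K n ≤ p2dDigit n x := Nat.ceil_le.2 hφn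
    obtain ⟨i, hi⟩ := p2dCov_cover K N hx.1 (le_trans (le_max_left _ _) hn)
      (le_trans (le_max_right _ _) hn) hd
    exact Set.mem_iUnion.2 ⟨i, hi⟩
  -- the key estimate
  have hsum : ∀ N, N₀ ≤ N →
      (∑' i : (Σ m : ℕ, (Fin m → ℕ)), EMetric.diam (t N i) ^ s)
        ≤ (2:ℝ≥0∞)^s * q^(N-1) * 2 := by
    intro N hN
    have hle : ∀ i : (Σ m : ℕ, (Fin m → ℕ)), EMetric.diam (t N i) ^ s ≤
        (if N ≤ i.1 + 1 then
          (2:ℝ≥0∞)^s * q^((∑ j, i.2 j) + i.1 + K (i.1+1)) else 0) := by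
      rintro ⟨m, f⟩
      show EMetric.diam (p2dCov K N m f) ^ s ≤ _
      by_cases hc : N ≤ m + 1
      · rw [if_pos hc, p2dCov_diam_true hc, p2d_ofReal_pow hs, ← hqdef]
        have hsm : (p2dDW m f).sum = (∑ j, f j) + m := by
          rw [p2dDW, List.sum_ofFn]
          simp [Finset.sum_add_distrib]
        rw [hsm]
      · rw [if_neg hc, p2dCov_diam_false hc, ENNReal.zero_rpow_of_pos hs]
    refine (ENNReal.tsum_le_tsum hle).trans ?_
    rw [ENNReal.tsum_sigma']
    have hinner : ∀ m : ℕ,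
        (∑' f : Fin m → ℕ, if N ≤ m + 1 then
            (2:ℝ≥0∞)^s * q^((∑ j, f j) + m + K (m+1)) else 0)
          ≤ ((2:ℝ≥0∞)^s * q^(N-1)) * (2⁻¹)^m := by
      intro m
      by_cases hc : N ≤ m + 1
      · simp only [if_pos hc]
        have hrw : ∀ f : Fin m → ℕ, (2:ℝ≥0∞)^s * q^((∑ j, f j) + m + K (m+1))
            = ((2:ℝ≥0∞)^s * q^(m + K (m+1))) * q^(∑ j, f j) := by
          intro f
          rw [show (∑ j, f j) + m + K (m+1) = (m + K (m+1)) + (∑ j, f j) by ring,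
            pow_add]
          ring
        rw [tsum_congr hrw, ENNReal.tsum_mul_left, p2d_tsum_pi_geom, ← hBdef]
        have e1 : q ^ (K (m+1)) ≤ (q^M)^m * q^M := by
          have g1 : M * (m+1) ≤ K (m+1) := hK _ (hN.trans hc)
          calc q ^ K (m+1) ≤ q ^ (M * (m+1)) :=
                pow_le_pow_right_of_le_one' hq1.le g1
          _ = (q^M)^m * q^M := by
              rw [← pow_mul, ← pow_add]
              congr 1
        have e2 : q ^ m ≤ q ^ (N-1) :=
          pow_le_pow_right_of_le_one' hq1.le (by omega)
        calc (2:ℝ≥0∞)^s * q^(m + K (m+1)) * B^m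
            = (2:ℝ≥0∞)^s * (q^m * q^(K (m+1)) * B^m) := by
              rw [pow_add]; ring
        _ ≤ (2:ℝ≥0∞)^s * (q^(N-1) * ((q^M)^m * q^M) * B^m) :=
              mul_le_mul_right (mul_le_mul_left (mul_le_mul' e2 e1) _) _
        _ = (2:ℝ≥0∞)^s * q^(N-1) * (q^M * (q^M * B)^m) := by
              rw [mul_pow]; ring
        _ ≤ (2:ℝ≥0∞)^s * q^(N-1) * (1 * (2⁻¹)^m) :=
              mul_le_mul_right
                (mul_le_mul' (pow_le_one' hq1.le M) (pow_le_pow_left' hqMB m)) _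
        _ = ((2:ℝ≥0∞)^s * q^(N-1)) * (2⁻¹)^m := by rw [one_mul]
      · simp only [if_neg hc, tsum_zero]
        exact zero_le
    refine (ENNReal.tsum_le_tsum hinner).trans ?_
    rw [ENNReal.tsum_mul_left, ENNReal.tsum_geometric, ENNReal.one_sub_inv_two,
      inv_inv]
  -- put it together
  have hmH := Measure.hausdorffMeasure_le_liminf_tsum s F r hrt t hdiam hcov
  rw [← le_zero_iff]
  refine hmH.trans ?_
  have hlim : Tendsto (fun N : ℕ => (2:ℝ≥0∞)^s * q^(N-1) * 2) atTop (𝓝 0) := by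
    have h1 : Tendsto (fun N : ℕ => q^(N-1)) atTop (𝓝 0) :=
      hpow0.comp (tendsto_sub_atTop_nat 1)
    have h2 := ENNReal.Tendsto.const_mul (a := (2:ℝ≥0∞)^s * 2) h1
      (Or.inr (by finiteness))
    rw [mul_zero] at h2
    have hfun : (fun N : ℕ => (2:ℝ≥0∞)^s * q^(N-1) * 2)
        = (fun N : ℕ => ((2:ℝ≥0∞)^s * 2) * q^(N-1)) := by
      funext N; ring
    rw [hfun]
    exact h2
  calc liminf (fun N => ∑' i, EMetric.diam (t N i) ^ s) atTop
      ≤ liminf (fun N : ℕ => (2:ℝ≥0∞)^s * q^(N-1) * 2) atTop := by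
        exact liminf_le_liminf (eventually_atTop.2 ⟨N₀, hsum⟩)
          (by isBoundedDefault) (by isBoundedDefault)
  _ = 0 := hlim.liminf_eq


/-- if `φ(n)/n → ∞` then `F(φ)` has Hausdorff dimension `0`. -/
theorem p2d_dimH_F_phi_zero (φ : ℕ → ℝ) (hφ : ∀ n, 0 < φ n)
    (h : Tendsto (fun n : ℕ => φ n / n) atTop atTop) :
    dimH {x : ℝ | x ∈ Set.Ioc (0:ℝ) 1 ∧
        ∃ᶠ n in atTop, (φ n ≤ (p2dDigit n x : ℝ))} = 0 := by
  refine le_antisymm ?_ zero_le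
  refine dimH_le fun d hd => ?_
  by_contra hlt
  have hd0 : (0:ℝ) < (d:ℝ) := by
    rcases eq_or_lt_of_le (show (0:ℝ≥0) ≤ d from zero_le) with h0 | h0
    · exact absurd (le_of_eq (by exact_mod_cast h0.symm) : (d:ℝ≥0∞) ≤ 0) hlt
    · exact_mod_cast h0
  rw [p2d_h0 φ hφ h hd0] at hd
  exact ENNReal.zero_ne_top hd
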